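/- Let ε ∈ [0,1), M > 1, and let 𝓟 and 𝓔 be nonempty sets of density matrices on ℂ^d. Then there exist a CPTP map F from 2×2 complex matrices to d×d complex matrices and a pair (ρ, τ) ∈ 𝓟 × 𝓔 satisfying F(π_M) = τ and T(F(|1⟩⟨1|), ρ) ≤ ε, if and only if there exist τ ∈ 𝓔 and ω ∈ B_ε(𝓟) such that Mτ − ω is positive semidefinite. -/

import Mathlib

open Matrix ComplexOrder

/-- Trace norm of a complex matrix: the trace of `sqrt(AᴴA)` (sum of singular values). -/
noncomputable def traceNorm {n : Type*} [Fintype n] [DecidableEq n]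
    (A : Matrix n n ℂ) : ℝ :=
  (((Matrix.posSemidef_conjTranspose_mul_self A).1.eigenvectorUnitary.1 *
      Matrix.diagonal (((↑) : ℝ → ℂ) ∘ (√·) ∘ (Matrix.posSemidef_conjTranspose_mul_self A).1.eigenvalues) *
      (star (Matrix.posSemidef_conjTranspose_mul_self A).1.eigenvectorUnitary : Matrix n n ℂ)).trace).re

/-- Trace distance `T(X,Y) = ‖X - Y‖₁ / 2`. -/
noncomputable def traceDist {n : Type*} [Fintype n] [DecidableEq n]
    (X Y : Matrix n n ℂ) : ℝ :=
  traceNorm (X - Y) / 2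

/-- A density matrix: positive semidefinite with unit trace. -/
def IsDensityMatrix {n : Type*} [Fintype n] (ρ : Matrix n n ℂ) : Prop :=
  ρ.PosSemidef ∧ ρ.trace = 1

/-- The battery Gibbs state `π_M = diag(1 - 1/M, 1/M)`. -/
noncomputable def piM (M : ℝ) : Matrix (Fin 2) (Fin 2) ℂ :=
  Matrix.diagonal ![((1 - 1/M : ℝ) : ℂ), ((1/M : ℝ) : ℂ)]

/-- The excited battery state `|1⟩⟨1| = diag(0,1)`. -/
def ket1 : Matrix (Fin 2) (Fin 2) ℂ :=
  Matrix.diagonal ![0, 1]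

/-- A test (POVM effect): `0 ≤ E ≤ I`. -/
def IsTest {n : Type*} [Fintype n] [DecidableEq n] (E : Matrix n n ℂ) : Prop :=
  E.PosSemidef ∧ (1 - E).PosSemidef

/-- Choi matrix `Σ_{ij} E_{ij} ⊗ F(E_{ij})` of a linear map on matrices. -/
noncomputable def choiMatrix {n m : Type*} [Fintype n] [DecidableEq n] [Fintype m]
    (F : Matrix n n ℂ →ₗ[ℂ] Matrix m m ℂ) :
    Matrix (n × m) (n × m) ℂ :=
  fun p q => F (Matrix.single p.1 q.1 1) p.2 q.2

/-- Completely positive (positive semidefinite Choi matrix) and trace preserving. -/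
def IsCPTP {n m : Type*} [Fintype n] [DecidableEq n] [Fintype m]
    (F : Matrix n n ℂ →ₗ[ℂ] Matrix m m ℂ) : Prop :=
  (choiMatrix F).PosSemidef ∧ ∀ X, (F X).trace = X.trace

/-- `n`-fold Kronecker (tensor) power of a `2 × 2` matrix, indexed by bit strings. -/
def tensPow (A : Matrix (Fin 2) (Fin 2) ℂ) (n : ℕ) :
    Matrix (Fin n → Fin 2) (Fin n → Fin 2) ℂ :=
  fun x y => ∏ i, A (x i) (y i)

/-- `ε`-ball (in trace distance) of density matrices around a set `𝓟`. -/
noncomputable def metBall {n : Type*} [Fintype n] [DecidableEq n]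
    (ε : ℝ) (P : Set (Matrix n n ℂ)) : Set (Matrix n n ℂ) :=
  {ω | IsDensityMatrix ω ∧ ∃ ρ ∈ P, traceDist ω ρ ≤ ε}

/- ################# auxiliary lemmas ################# -/

private lemma rsmul {n : Type*} [Fintype n] (r : ℝ) (X : Matrix n n ℂ) :
    r • X = (r:ℂ) • X := by
  ext i j; simp [Matrix.smul_apply, Complex.real_smul]

private lemma psd_smul {n : Type*} [Fintype n] {c : ℂ} {A : Matrix n n ℂ}
    (hc : 0 ≤ c) (hA : A.PosSemidef) : (c • A).PosSemidef := by
  have hcs : star c = c := by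
    rw [Complex.le_def] at hc
    apply Complex.ext <;> simp [hc.2.symm]
  rw [posSemidef_iff_dotProduct_mulVec]; constructor
  · unfold Matrix.IsHermitian
    rw [conjTranspose_smul, hcs, hA.1]
  · intro x
    rw [smul_mulVec, dotProduct_smul, smul_eq_mul]
    exact mul_nonneg hc (hA.dotProduct_mulVec_nonneg x)

private lemma corner_embed_psd {n m : Type*} [Fintype n] [DecidableEq n] [Fintype m]
    {A : Matrix m m ℂ} (hA : A.PosSemidef) (i : n) :
    (Matrix.of fun p q : n × m => if p.1 = i ∧ q.1 = i then A p.2 q.2 else 0).PosSemidef := by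
  rw [posSemidef_iff_dotProduct_mulVec]; constructor
  · ext ⟨j,p⟩ ⟨k,q⟩
    simp only [conjTranspose_apply, of_apply]
    by_cases h1 : j = i <;> by_cases h2 : k = i <;> simp [h1, h2, hA.1.apply]
  · intro x
    have key : star x ⬝ᵥ (Matrix.of fun p q : n × m =>
          if p.1 = i ∧ q.1 = i then A p.2 q.2 else 0) *ᵥ x
        = star (fun p => x (i,p)) ⬝ᵥ A *ᵥ (fun p => x (i,p)) := by
      simp only [dotProduct, mulVec, Fintype.sum_prod_type, of_apply, Pi.star_apply]
      rw [Finset.sum_comm]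
      simp [ite_and, Finset.sum_ite_eq, dotProduct, Finset.mul_sum, mul_comm, mul_assoc,
        mul_left_comm]
    rw [key]; exact hA.dotProduct_mulVec_nonneg _

private lemma feii_psd {n m : Type*} [Fintype n] [DecidableEq n] [Fintype m]
    {F : Matrix n n ℂ →ₗ[ℂ] Matrix m m ℂ} (h : (choiMatrix F).PosSemidef) (i : n) :
    (F (Matrix.single i i 1)).PosSemidef := by
  have e : F (Matrix.single i i 1)
      = (choiMatrix F).submatrix (fun p => (i,p)) (fun p => (i,p)) := by
    ext p q; rfl
  rw [e]; exact h.submatrix _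

/-- The measure-and-prepare map used in the converse direction. -/
noncomputable def prep {d : ℕ} (σ ω : Matrix (Fin d) (Fin d) ℂ) :
    Matrix (Fin 2) (Fin 2) ℂ →ₗ[ℂ] Matrix (Fin d) (Fin d) ℂ where
  toFun X := X 0 0 • σ + X 1 1 • ω
  map_add' X Y := by simp [Matrix.add_apply, add_smul]; abel
  map_smul' c X := by simp [Matrix.smul_apply, smul_smul, smul_add]

private lemma choi_prep {d : ℕ} (σ ω : Matrix (Fin d) (Fin d) ℂ) :
    choiMatrix (prep σ ω)
      = (Matrix.of fun p q : Fin 2 × Fin d => if p.1 = 0 ∧ q.1 = 0 then σ p.2 q.2 else 0)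
      + (Matrix.of fun p q : Fin 2 × Fin d => if p.1 = 1 ∧ q.1 = 1 then ω p.2 q.2 else 0) := by
  ext ⟨j,p⟩ ⟨k,q⟩
  simp only [choiMatrix, prep, LinearMap.coe_mk, AddHom.coe_mk, Matrix.single,
    Matrix.add_apply, Matrix.smul_apply, Matrix.of_apply, ite_and, smul_eq_mul]
  split_ifs <;> simp

private lemma prep_trace {d : ℕ} {σ ω : Matrix (Fin d) (Fin d) ℂ}
    (hσ : σ.trace = 1) (hω : ω.trace = 1)
    (X : Matrix (Fin 2) (Fin 2) ℂ) : ((prep σ ω) X).trace = X.trace := by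
  simp only [prep, LinearMap.coe_mk, AddHom.coe_mk, Matrix.trace_add, Matrix.trace_smul,
    hσ, hω, smul_eq_mul, mul_one]
  simp [Matrix.trace, Matrix.diag, Fin.sum_univ_two]

/-- one-shot work of formation from a clean battery under GPO is
characterized by the smoothed max-relative entropy condition `Mτ - ω ≥ 0`. -/
theorem stmt_7 {d : ℕ} (ε M : ℝ) (hε : ε ∈ Set.Ico (0:ℝ) 1) (hM : 1 < M)
    (𝓟 𝓔 : Set (Matrix (Fin d) (Fin d) ℂ))
    (h𝓟ne : 𝓟.Nonempty) (h𝓔ne : 𝓔.Nonempty)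
    (h𝓟 : ∀ ρ ∈ 𝓟, IsDensityMatrix ρ) (h𝓔 : ∀ τ ∈ 𝓔, IsDensityMatrix τ) :
    (∃ F : Matrix (Fin 2) (Fin 2) ℂ →ₗ[ℂ] Matrix (Fin d) (Fin d) ℂ,
        IsCPTP F ∧ ∃ ρ ∈ 𝓟, ∃ τ ∈ 𝓔,
          F (piM M) = τ ∧ traceDist (F ket1) ρ ≤ ε) ↔
      (∃ τ ∈ 𝓔, ∃ ω ∈ metBall ε 𝓟, (M • τ - ω).PosSemidef) := by
  have hM0 : (M:ℂ) ≠ 0 := by exact_mod_cast ne_of_gt (lt_trans one_pos hM)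
  have hM1 : (M:ℂ) - 1 ≠ 0 := by
    have h2 : (M:ℝ) - 1 ≠ 0 := ne_of_gt (by linarith)
    exact_mod_cast fun h => h2 (by exact_mod_cast h)
  constructor
  · rintro ⟨F, ⟨hChoi, hTP⟩, ρ, hρ, τ, hτ, hFpi, hFdist⟩
    refine ⟨τ, hτ, F ket1, ⟨⟨?_, ?_⟩, ρ, hρ, hFdist⟩, ?_⟩
    · have e : ket1 = Matrix.single 1 1 1 := by
        ext i j; fin_cases i <;> fin_cases j <;> simp [ket1, Matrix.single]
      rw [e]; exact feii_psd hChoi 1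
    · rw [hTP]
      simp [ket1, Matrix.trace, Matrix.diag, Fin.sum_univ_two]
    · rw [← hFpi, rsmul, ← _root_.map_smul, ← map_sub]
      have e2 : (M:ℂ) • piM M - ket1 = ((M:ℂ) - 1) • Matrix.single 0 0 1 := by
        ext i j
        fin_cases i <;> fin_cases j <;>
          simp [piM, ket1, Matrix.single, Matrix.smul_apply] <;> field_simp <;> norm_num
      rw [e2, _root_.map_smul]
      refine psd_smul ?_ (feii_psd hChoi 0)
      have e3 : (((M - 1 : ℝ)):ℂ) = (M:ℂ) - 1 := by push_cast; ring
      rw [← e3]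
      exact_mod_cast (by linarith : (0:ℝ) ≤ M - 1)
  · rintro ⟨τ, hτ𝓔, ω, ⟨⟨hωpsd, hωtr⟩, ρ, hρ, hdist⟩, hPSD⟩
    obtain ⟨hτpsd, hτtr⟩ := h𝓔 τ hτ𝓔
    set σ : Matrix (Fin d) (Fin d) ℂ := ((M:ℂ) - 1)⁻¹ • ((M:ℂ) • τ - ω) with hσdef
    have hσpsd : σ.PosSemidef := by
      refine psd_smul ?_ ?_
      · have e3 : ((((M - 1 : ℝ))⁻¹ : ℝ):ℂ) = ((M:ℂ) - 1)⁻¹ := by push_cast; ring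
        rw [← e3]
        exact_mod_cast inv_nonneg.mpr (by linarith : (0:ℝ) ≤ M - 1)
      · have e4 : (M:ℂ) • τ - ω = M • τ - ω := by rw [rsmul]
        rw [e4]; exact hPSD
    have hσtr : σ.trace = 1 := by
      simp [hσdef, Matrix.trace_smul, Matrix.trace_sub, hτtr, hωtr, smul_eq_mul]
      field_simp
    refine ⟨prep σ ω, ⟨?_, prep_trace hσtr hωtr⟩, ρ, hρ, τ, hτ𝓔, ?_, ?_⟩
    · rw [choi_prep]
      exact (corner_embed_psd hσpsd 0).add (corner_embed_psd hωpsd 1)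
    · show piM M 0 0 • σ + piM M 1 1 • ω = τ
      have e5 : piM M 0 0 = ((1 - 1/M : ℝ) : ℂ) := by simp [piM]
      have e6 : piM M 1 1 = ((1/M : ℝ) : ℂ) := by simp [piM]
      rw [e5, e6, hσdef]
      ext p q
      simp only [Matrix.add_apply, Matrix.smul_apply, Matrix.sub_apply, smul_eq_mul]
      push_cast
      field_simp
      ring
    · have e7 : prep σ ω ket1 = ω := by
        show ket1 0 0 • σ + ket1 1 1 • ω = ω
        simp [ket1]
      rw [e7]; exact hdist
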